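/- Fix s ≥ 1 and n > 2s+1, and let f be defined by f(x)_j = (x·a^{(j)}) mod (2s+1)n^j for j ∈ [2s+1], with a^{(j)}_i = Σ_{ℓ=1}^i ℓ^{j−1}. For each r in M = Π_{j=1}^{2s+1}[0,(2s+1)n^j−1], the code C_r = {c ∈ {0,1}^n : f(c) = r} is a single-deletion s-substitution correcting code. -/

import Mathlib

/-- `B_{1,s}(x)`: all strings of length `L - 1` obtained from `x` by one deletion
and at most `s` substitutions. -/
def ball (s : ℕ) {L : ℕ} (x : Fin L → Bool) : Set (Fin (L - 1) → Bool) :=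
  {y | ∃ f : Fin (L - 1) → Fin L, StrictMono f ∧ hammingDist y (x ∘ f) ≤ s}

/-- `a^{(j)}_i = Σ_{ℓ=1}^i ℓ^{j-1}` (natural-number version). -/
def avec (j i : ℕ) : ℕ := ∑ ℓ ∈ Finset.Icc 1 i, ℓ ^ (j - 1)

/-- The inner product `x · a^{(j)}` for a string `x` of length `L`,
where position `i : Fin L` is the 1-based position `i + 1`. -/
def dotA {L : ℕ} (j : ℕ) (x : Fin L → Bool) : ℕ :=
  ∑ i : Fin L, (if x i then 1 else 0) * avec j (i.val + 1)

section Aux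

open Finset Polynomial

private lemma aux_factor_pos {k l : ℕ} (h : k ≠ l) :
    0 < (2*(l:ℤ) - (2*k+1)) * (2*(l+1:ℕ) - (2*k+1)) := by
  rcases lt_or_gt_of_ne h with h | h
  · have h1 : (0:ℤ) < 2*(l:ℤ) - (2*k+1) := by push_cast; omega
    have h2 : (0:ℤ) < 2*((l:ℤ)+1) - (2*k+1) := by push_cast; omega
    push_cast
    nlinarith
  · have h1 : (2*(l:ℤ) - (2*k+1)) < 0 := by push_cast; omega
    have h2 : (2*((l:ℤ)+1) - (2*k+1)) < 0 := by push_cast; omega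
    push_cast
    nlinarith

/-- Sign/moment lemma: if `d` is one-signed on each stretch between boundaries `B`
(with `|B| ≤ T`), and all moments up to degree `T` vanish, then `d = 0` on `[1,n]`. -/
lemma sign_moment (d : ℕ → ℤ) (n T : ℕ) (B : Finset ℕ) (hBcard : B.card ≤ T)
    (hsign : ∀ l ∈ Finset.Icc 1 n, ∀ l' ∈ Finset.Icc 1 n, l ≤ l' →
      (∀ k ∈ B, ¬(l ≤ k ∧ k < l')) → 0 ≤ d l * d l')
    (hmom : ∀ j ≤ T, ∑ l ∈ Finset.Icc 1 n, d l * (l:ℤ)^j = 0) :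
    ∀ l ∈ Finset.Icc 1 n, d l = 0 := by
  classical
  -- stretch id
  set idB : ℕ → ℕ := fun l => (B.filter (· < l)).card with hidB
  have idmono : ∀ {a b : ℕ}, a ≤ b → idB a ≤ idB b := by
    intro a b hab
    refine Finset.card_le_card (fun x hx => ?_)
    rw [Finset.mem_filter] at hx ⊢
    exact ⟨hx.1, lt_of_lt_of_le hx.2 hab⟩
  have id_eq_nosep : ∀ {a b : ℕ}, a ≤ b → idB a = idB b → ∀ k ∈ B, ¬(a ≤ k ∧ k < b) := by
    intro a b hab hid k hk ⟨h1, h2⟩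
    have hss : B.filter (· < a) ⊂ B.filter (· < b) := by
      have hsub : B.filter (· < a) ⊆ B.filter (· < b) := by
        intro x hx
        rw [Finset.mem_filter] at hx ⊢
        exact ⟨hx.1, lt_of_lt_of_le hx.2 hab⟩
      refine (Finset.ssubset_iff_of_subset hsub).mpr ?_
      exact ⟨k, Finset.mem_filter.mpr ⟨hk, h2⟩, fun hmem => absurd (Finset.mem_filter.mp hmem).2 (by omega)⟩
    exact absurd hid (Nat.ne_of_lt (Finset.card_lt_card hss))
  have id_step : ∀ {a : ℕ}, a ∉ B → idB a = idB (a+1) := by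
    intro a ha
    apply le_antisymm (idmono (Nat.le_succ a))
    apply Finset.card_le_card
    intro x hx
    rw [Finset.mem_filter] at hx ⊢
    refine ⟨hx.1, ?_⟩
    rcases Nat.lt_succ_iff_lt_or_eq.mp hx.2 with h | h
    · exact h
    · exact absurd (h ▸ hx.1) ha
  -- sign function
  set τ : ℕ → ℤ := fun m => if ∀ l' ∈ Finset.Icc 1 n, idB l' = m → 0 ≤ d l' then 1 else -1 with hτ
  set σ : ℕ → ℤ := fun l => τ (idB l) with hσ
  have hσ1 : ∀ l, σ l = 1 ∨ σ l = -1 := by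
    intro l; simp only [hσ, hτ]; split <;> simp
  have hσd : ∀ l ∈ Finset.Icc 1 n, 0 ≤ σ l * d l := by
    intro l hl
    simp only [hσ, hτ]
    split_ifs with h
    · have := h l hl rfl; linarith
    · push_neg at h
      rw [neg_one_mul]
      obtain ⟨l'', hl'', hid, hneg⟩ := h
      rcases le_or_gt (d l) 0 with hle | hgt
      · linarith
      · exfalso
        have hprodneg : d l * d l'' < 0 := mul_neg_of_pos_of_neg hgt hneg
        rcases le_total l l'' with hll | hll
        · have := hsign l hl l'' hl'' hll (id_eq_nosep hll hid.symm)
          rw [mul_comm] at this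
          linarith
        · have := hsign l'' hl'' l hl hll (id_eq_nosep hll hid)
          linarith
  -- flip set
  set F : Finset ℕ := (Finset.Icc 1 n).filter (fun l => σ l ≠ σ (l+1)) with hF
  have hFB : F ⊆ B := by
    intro a ha
    rw [hF, Finset.mem_filter] at ha
    by_contra hab
    exact ha.2 (by simp only [hσ]; rw [id_step hab])
  have hFcard : F.card ≤ T := le_trans (Finset.card_le_card hFB) hBcard
  -- the polynomial
  set Q : Polynomial ℤ := ∏ k ∈ F, (Polynomial.C 2 * Polynomial.X - Polynomial.C (2*(k:ℤ)+1)) with hQ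
  set q : ℕ → ℤ := fun l => ∏ k ∈ F, (2*(l:ℤ) - (2*k+1)) with hq
  have hqeval : ∀ l : ℕ, Q.eval (l:ℤ) = q l := by
    intro l; rw [hQ, Polynomial.eval_prod]; simp [hq]
  have hQdeg : Q.natDegree ≤ T := by
    refine le_trans (Polynomial.natDegree_prod_le _ _) (le_trans ?_ hFcard)
    refine le_trans (Finset.sum_le_card_nsmul _ _ 1 ?_) (by simp)
    intro k _
    have hrw : (Polynomial.C (2:ℤ) * Polynomial.X - Polynomial.C (2*(k:ℤ)+1))
        = Polynomial.C (2:ℤ) * Polynomial.X + Polynomial.C (-(2*(k:ℤ)+1)) := by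
      rw [map_neg]; ring
    rw [hrw]
    exact Polynomial.natDegree_linear_le
  have hqne : ∀ l : ℕ, q l ≠ 0 := by
    intro l
    rw [hq]
    refine Finset.prod_ne_zero_iff.mpr (fun k _ => ?_)
    omega
  -- sign step
  have hstep : ∀ l : ℕ, (l ∈ F → q l * q (l+1) < 0) ∧ (l ∉ F → 0 < q l * q (l+1)) := by
    intro l
    have hprod : q l * q (l+1) = ∏ k ∈ F, ((2*(l:ℤ) - (2*k+1)) * (2*((l+1:ℕ):ℤ) - (2*k+1))) := by
      rw [hq, Finset.prod_mul_distrib]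
    constructor
    · intro hl
      rw [hprod, ← Finset.prod_erase_mul _ _ hl]
      have hneg : (2*(l:ℤ) - (2*l+1)) * (2*((l+1:ℕ):ℤ) - (2*l+1)) = -1 := by push_cast; ring
      rw [hneg]
      have : 0 < ∏ k ∈ F.erase l, ((2*(l:ℤ) - (2*k+1)) * (2*((l+1:ℕ):ℤ) - (2*k+1))) :=
        Finset.prod_pos (fun k hk => aux_factor_pos (Finset.ne_of_mem_erase hk))
      linarith
    · intro hl
      rw [hprod]
      exact Finset.prod_pos (fun k hk => aux_factor_pos (fun h => hl (h ▸ hk)))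
  -- constant sign of σ * q on [1,n]
  have hchain : ∀ m, 1 ≤ m → m ≤ n → 0 < (σ 1 * q 1) * (σ m * q m) := by
    intro m
    induction m with
    | zero => omega
    | succ m ih =>
      intro h1 hm
      rcases Nat.eq_or_lt_of_le h1 with h | h
      · rw [← h]
        have hsq : σ 1 * σ 1 = 1 := by rcases hσ1 1 with h' | h' <;> rw [h'] <;> ring
        have hqq : (0:ℤ) < q 1 * q 1 := mul_self_pos.mpr (hqne 1)
        calc (0:ℤ) < q 1 * q 1 := hqq
          _ = (σ 1 * σ 1) * (q 1 * q 1) := by rw [hsq, one_mul]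
          _ = σ 1 * q 1 * (σ 1 * q 1) := by ring
      · have hm1 : 1 ≤ m := by omega
        have ihm := ih hm1 (by omega)
        have hs2 : 0 < (σ m * q m) * (σ (m+1) * q (m+1)) := by
          by_cases hmF : m ∈ F
          · have hq2 := (hstep m).1 hmF
            have hσ2 : σ m * σ (m+1) = -1 := by
              have := (Finset.mem_filter.mp hmF).2
              rcases hσ1 m with h' | h' <;> rcases hσ1 (m+1) with h'' | h'' <;>
                simp [h', h''] at this ⊢
            have hrw2 : (σ m * q m) * (σ (m+1) * q (m+1)) = (σ m * σ (m+1)) * (q m * q (m+1)) := by ring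
            rw [hrw2, hσ2]
            linarith
          · have hq2 := (hstep m).2 hmF
            have hσ2 : σ m * σ (m+1) = 1 := by
              have hmem : m ∉ (Finset.Icc 1 n).filter (fun l => σ l ≠ σ (l+1)) := hmF
              rw [Finset.mem_filter] at hmem
              push_neg at hmem
              have heq : σ m = σ (m+1) := by
                by_cases hmic : m ∈ Finset.Icc 1 n
                · exact hmem hmic
                · exact absurd (Finset.mem_Icc.mpr ⟨hm1, by omega⟩) hmic
              rcases hσ1 (m+1) with h' | h' <;> rw [heq, h'] <;> ring
            have hrw2 : (σ m * q m) * (σ (m+1) * q (m+1)) = (σ m * σ (m+1)) * (q m * q (m+1)) := by ring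
            rw [hrw2, hσ2, one_mul]
            exact hq2
        have hmne : (σ m * q m) ≠ 0 := by
          intro h0; rw [h0] at ihm; simp at ihm
        have hsqpos : (0:ℤ) < (σ m * q m) * (σ m * q m) := mul_self_pos.mpr hmne
        have hpos2 : 0 < (σ 1 * q 1 * (σ (m+1) * q (m+1))) * ((σ m * q m) * (σ m * q m)) := by
          have hk : (σ 1 * q 1 * (σ (m+1) * q (m+1))) * ((σ m * q m) * (σ m * q m))
              = (σ 1 * q 1 * (σ m * q m)) * ((σ m * q m) * (σ (m+1) * q (m+1))) := by ring
          rw [hk]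
          exact mul_pos ihm hs2
        rcases lt_trichotomy (σ 1 * q 1 * (σ (m+1) * q (m+1))) 0 with hx | hx | hx
        · exact absurd hpos2 (not_lt.mpr (le_of_lt (mul_neg_of_neg_of_pos hx hsqpos)))
        · rw [hx, zero_mul] at hpos2; exact absurd hpos2 (lt_irrefl 0)
        · exact hx
  -- total sum is zero
  have hsum : ∑ l ∈ Finset.Icc 1 n, d l * q l = 0 := by
    have hev : ∀ l : ℕ, q l = ∑ j ∈ Finset.range (T+1), Q.coeff j * (l:ℤ)^j := by
      intro l
      rw [← hqeval]
      exact Polynomial.eval_eq_sum_range' (by omega) _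
    calc ∑ l ∈ Finset.Icc 1 n, d l * q l
        = ∑ l ∈ Finset.Icc 1 n, ∑ j ∈ Finset.range (T+1), Q.coeff j * (d l * (l:ℤ)^j) := by
          refine Finset.sum_congr rfl (fun l _ => ?_)
          rw [hev l, Finset.mul_sum]
          refine Finset.sum_congr rfl (fun j _ => by ring)
      _ = ∑ j ∈ Finset.range (T+1), Q.coeff j * ∑ l ∈ Finset.Icc 1 n, d l * (l:ℤ)^j := by
          rw [Finset.sum_comm]
          refine Finset.sum_congr rfl (fun j _ => by rw [Finset.mul_sum])
      _ = 0 := by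
          refine Finset.sum_eq_zero (fun j hj => ?_)
          rw [hmom j (by simpa using Nat.lt_succ_iff.mp (Finset.mem_range.mp hj)), mul_zero]
  -- conclude
  have hterm : ∀ l ∈ Finset.Icc 1 n, 0 ≤ (σ 1 * q 1) * (d l * q l) := by
    intro l hl
    have h1 := Finset.mem_Icc.mp hl
    have hc := hchain l h1.1 h1.2
    have hd := hσd l hl
    have hσsq : σ l * σ l = 1 := by rcases hσ1 l with h' | h' <;> rw [h'] <;> ring
    have key : (σ 1 * q 1) * (d l * q l) = (σ l * d l) * ((σ 1 * q 1) * (σ l * q l)) := by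
      rcases hσ1 l with h' | h' <;> rw [h'] <;> ring
    rw [key]
    exact mul_nonneg hd (le_of_lt hc)
  intro l hl
  have hall : ∀ l' ∈ Finset.Icc 1 n, (σ 1 * q 1) * (d l' * q l') = 0 := by
    have hz : ∑ l' ∈ Finset.Icc 1 n, (σ 1 * q 1) * (d l' * q l') = 0 := by
      rw [← Finset.mul_sum, hsum, mul_zero]
    exact (Finset.sum_eq_zero_iff_of_nonneg hterm).mp hz
  have := hall l hl
  have h1 := Finset.mem_Icc.mp hl
  have hc := hchain l h1.1 h1.2
  have h1ne : σ 1 * q 1 ≠ 0 := fun h0 => by rw [h0] at hc; simp at hc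
  have hdq : d l * q l = 0 := by
    rcases mul_eq_zero.mp this with h | h
    · exact absurd h h1ne
    · exact h
  rcases mul_eq_zero.mp hdq with h | h
  · exact h
  · exact absurd h (hqne l)


open Finset

private lemma avec_succ (j m : ℕ) : avec j (m+1) = avec j m + (m+1)^(j-1) := by
  rw [avec, avec, Finset.sum_Icc_succ_top (by omega)]

private lemma avec_mono (j : ℕ) {a b : ℕ} (h : a ≤ b) : avec j a ≤ avec j b := by
  exact Finset.sum_le_sum_of_subset (Finset.Icc_subset_Icc_right h)

private lemma avec_le (j m n : ℕ) (h : m ≤ n) : avec j m ≤ m * n^(j-1) := by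
  calc avec j m ≤ (Finset.Icc 1 m).card • n^(j-1) := by
        refine Finset.sum_le_card_nsmul _ _ _ (fun x hx => ?_)
        rw [Finset.mem_Icc] at hx
        exact Nat.pow_le_pow_left (le_trans hx.2 h) _
    _ = m * n^(j-1) := by rw [Nat.card_Icc]; simp [smul_eq_mul]

private lemma suffix_split (n P : ℕ) (C U : ℕ → ℤ) (hPn : P ≤ n-1) (hn : 1 ≤ n)
    (hU : ∀ i < n-1, U i = if i < P then C i else C (i+1)) :
    (∀ l, l ≤ P+1 →
      ∑ i ∈ Finset.Ico (l-1) n, C i = C P + ∑ i ∈ Finset.Ico (l-1) (n-1), U i)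
    ∧ (∀ l, P+2 ≤ l →
      ∑ i ∈ Finset.Ico (l-1) n, C i = ∑ i ∈ Finset.Ico (l-2) (n-1), U i) := by
  have hshift : ∀ a, P ≤ a → ∑ i ∈ Finset.Ico a (n-1), U i = ∑ i ∈ Finset.Ico (a+1) n, C i := by
    intro a ha
    have h1 : ∑ i ∈ Finset.Ico a (n-1), U i = ∑ i ∈ Finset.Ico a (n-1), C (i+1) := by
      refine Finset.sum_congr rfl (fun i hi => ?_)
      rw [Finset.mem_Ico] at hi
      rw [hU i hi.2, if_neg (by omega)]
    rw [h1, Finset.sum_Ico_add' C a (n-1) 1]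
    have h2 : n - 1 + 1 = n := by omega
    rw [h2]
  constructor
  · intro l hl
    have hsplit : ∑ i ∈ Finset.Ico (l-1) n, C i
        = ∑ i ∈ Finset.Ico (l-1) P, C i + ∑ i ∈ Finset.Ico P n, C i := by
      rw [Finset.sum_Ico_consecutive _ (by omega) (by omega)]
    have hbot : ∑ i ∈ Finset.Ico P n, C i = C P + ∑ i ∈ Finset.Ico (P+1) n, C i :=
      Finset.sum_eq_sum_Ico_succ_bot (by omega) C
    have hlow : ∑ i ∈ Finset.Ico (l-1) P, C i = ∑ i ∈ Finset.Ico (l-1) P, U i := by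
      refine Finset.sum_congr rfl (fun i hi => ?_)
      rw [Finset.mem_Ico] at hi
      rw [hU i (by omega), if_pos hi.2]
    have hcomb : ∑ i ∈ Finset.Ico (l-1) P, U i + ∑ i ∈ Finset.Ico P (n-1), U i
        = ∑ i ∈ Finset.Ico (l-1) (n-1), U i :=
      Finset.sum_Ico_consecutive _ (by omega) (by omega)
    rw [hsplit, hbot, hlow, ← hshift P le_rfl, ← hcomb]
    ring
  · intro l hl
    rw [hshift (l-2) (by omega)]
    have h2 : l - 2 + 1 = l - 1 := by omega
    rw [h2]

private lemma dot_decomp (n P j : ℕ) (C U : ℕ → ℤ) (hPn : P ≤ n-1) (hn : 1 ≤ n)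
    (hU : ∀ i < n-1, U i = if i < P then C i else C (i+1)) :
    ∑ i ∈ Finset.range n, C i * (avec j (i+1) : ℤ)
      = (∑ i ∈ Finset.range (n-1), U i * (avec j (i+1) : ℤ))
        + (C P * (avec j (P+1) : ℤ)
           + ∑ i ∈ Finset.Ico P (n-1), U i * (((i+2)^(j-1) : ℕ) : ℤ)) := by
  have hP : P < n := by omega
  have e1 : ∑ i ∈ Finset.range n, C i * (avec j (i+1) : ℤ)
      = ∑ i ∈ Finset.Ico 0 P, C i * (avec j (i+1) : ℤ)
        + (C P * (avec j (P+1) : ℤ) + ∑ i ∈ Finset.Ico (P+1) n, C i * (avec j (i+1) : ℤ)) := by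
    rw [Finset.range_eq_Ico, ← Finset.sum_Ico_consecutive _ (Nat.zero_le P) (le_of_lt hP),
      Finset.sum_eq_sum_Ico_succ_bot hP]
  have e2 : ∑ i ∈ Finset.Ico (P+1) n, C i * (avec j (i+1) : ℤ)
      = ∑ i ∈ Finset.Ico P (n-1), C (i+1) * (avec j (i+2) : ℤ) := by
    rw [Finset.sum_Ico_add' (fun i => C i * (avec j (i+1) : ℤ)) P (n-1) 1]
    have : n - 1 + 1 = n := by omega
    rw [this]
  have e3 : ∑ i ∈ Finset.Ico P (n-1), C (i+1) * (avec j (i+2) : ℤ)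
      = ∑ i ∈ Finset.Ico P (n-1), U i * (avec j (i+1) : ℤ)
        + ∑ i ∈ Finset.Ico P (n-1), U i * (((i+2)^(j-1) : ℕ) : ℤ) := by
    rw [← Finset.sum_add_distrib]
    refine Finset.sum_congr rfl (fun i hi => ?_)
    rw [Finset.mem_Ico] at hi
    rw [hU i hi.2, if_neg (by omega)]
    have : (avec j (i+2) : ℤ) = (avec j (i+1) : ℤ) + (((i+2)^(j-1) : ℕ) : ℤ) := by
      have := avec_succ j (i+1)
      push_cast [this]
      ring
    rw [this]
    ring
  have e4 : ∑ i ∈ Finset.Ico 0 P, C i * (avec j (i+1) : ℤ)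
      = ∑ i ∈ Finset.Ico 0 P, U i * (avec j (i+1) : ℤ) := by
    refine Finset.sum_congr rfl (fun i hi => ?_)
    rw [Finset.mem_Ico] at hi
    rw [hU i (by omega), if_pos hi.2]
  have e5 : ∑ i ∈ Finset.Ico 0 P, U i * (avec j (i+1) : ℤ)
      + ∑ i ∈ Finset.Ico P (n-1), U i * (avec j (i+1) : ℤ)
      = ∑ i ∈ Finset.range (n-1), U i * (avec j (i+1) : ℤ) := by
    rw [Finset.range_eq_Ico]
    exact Finset.sum_Ico_consecutive _ (Nat.zero_le P) (by omega)
  rw [e1, e2, e3, e4]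
  rw [← e5]
  ring

private lemma telescope_avec (n P j : ℕ) (hPn : P ≤ n-1) (hn : 1 ≤ n) :
    avec j (P+1) + ∑ i ∈ Finset.Ico P (n-1), (i+2)^(j-1) = avec j n := by
  have h1 : ∑ i ∈ Finset.Ico P (n-1), (i+2)^(j-1) = ∑ m ∈ Finset.Ico (P+2) (n+1), m^(j-1) := by
    rw [Finset.sum_Ico_add' (fun m => m^(j-1)) P (n-1) 2]
    have h0 : n - 1 + 2 = n + 1 := by omega
    rw [h0]
  rw [avec, avec, h1]
  have h2 : Finset.Icc 1 (P+1) = Finset.Ico 1 (P+2) := by ext x; simp [Nat.lt_succ_iff]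
  have h3 : Finset.Icc 1 n = Finset.Ico 1 (n+1) := by ext x; simp [Nat.lt_succ_iff]
  rw [h2, h3]
  exact Finset.sum_Ico_consecutive _ (by omega) (by omega)

set_option maxHeartbeats 1000000 in
private lemma core (s n : ℕ) (hs : 1 ≤ s) (hn : 2*s+1 < n)
    (C C' U U' : ℕ → ℤ) (P Q : ℕ)
    (hPn : P ≤ n-1) (hQn : Q ≤ n-1) (hPQ : P ≤ Q)
    (hC01 : ∀ i, 0 ≤ C i ∧ C i ≤ 1) (hC01' : ∀ i, 0 ≤ C' i ∧ C' i ≤ 1)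
    (hU : ∀ i < n-1, U i = if i < P then C i else C (i+1))
    (hU' : ∀ i < n-1, U' i = if i < Q then C' i else C' (i+1))
    (hW : (((Finset.range (n-1)).filter (fun i => U i ≠ U' i))).card ≤ 2*s)
    (hmod : ∀ j ∈ Finset.Icc 1 (2*s+1),
      ((2*s+1:ℤ) * (n:ℤ)^j) ∣ (∑ i ∈ Finset.range n, C i * (avec j (i+1) : ℤ)
        - ∑ i ∈ Finset.range n, C' i * (avec j (i+1) : ℤ)))
    (hsm : ∀ (d : ℕ → ℤ) (T : ℕ) (B : Finset ℕ), B.card ≤ T →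
      (∀ l ∈ Finset.Icc 1 n, ∀ l' ∈ Finset.Icc 1 n, l ≤ l' →
        (∀ k ∈ B, ¬(l ≤ k ∧ k < l')) → 0 ≤ d l * d l') →
      (∀ j ≤ T, ∑ l ∈ Finset.Icc 1 n, d l * (l:ℤ)^j = 0) →
      ∀ l ∈ Finset.Icc 1 n, d l = 0) :
    ∀ i < n, C i = C' i := by
  classical
  have hn1 : 1 ≤ n := by omega
  have hn4 : 4 ≤ n := by omega
  set W := (Finset.range (n-1)).filter (fun i => U i ≠ U' i) with hWdef
  set d : ℕ → ℤ := fun l => ∑ i ∈ Finset.Ico (l-1) n, (C i - C' i) with hd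
  set e : ℕ → ℤ := fun m => ∑ i ∈ Finset.Ico (m-1) (n-1), (U i - U' i) with he
  have hU01 : ∀ i < n-1, 0 ≤ U i ∧ U i ≤ 1 := by
    intro i hi; rw [hU i hi]; split_ifs; exacts [hC01 i, hC01 (i+1)]
  have hU01' : ∀ i < n-1, 0 ≤ U' i ∧ U' i ≤ 1 := by
    intro i hi; rw [hU' i hi]; split_ifs; exacts [hC01' i, hC01' (i+1)]
  obtain ⟨sC1, sC2⟩ := suffix_split n P C U hPn hn1 hU
  obtain ⟨sC1', sC2'⟩ := suffix_split n Q C' U' hQn hn1 hU'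
  have hdsub : ∀ l, d l = ∑ i ∈ Finset.Ico (l-1) n, C i - ∑ i ∈ Finset.Ico (l-1) n, C' i := by
    intro l; simp only [hd]; exact Finset.sum_sub_distrib _ _
  have hesub : ∀ m, e m = ∑ i ∈ Finset.Ico (m-1) (n-1), U i - ∑ i ∈ Finset.Ico (m-1) (n-1), U' i := by
    intro m; simp only [he]; exact Finset.sum_sub_distrib _ _
  -- region formulas
  have dlow : ∀ l, l ≤ P+1 → d l = e l + (C P - C' Q) := by
    intro l hl
    rw [hdsub, hesub, sC1 l hl, sC1' l (by omega)]
    ring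
  have dmid : ∀ l, P+2 ≤ l → l ≤ Q+1 → d l = e l + (U (l-2) - C' Q) := by
    intro l h1 h2
    have hsplit : ∑ i ∈ Finset.Ico (l-2) (n-1), U i
        = U (l-2) + ∑ i ∈ Finset.Ico (l-1) (n-1), U i := by
      rw [Finset.sum_eq_sum_Ico_succ_bot (by omega : l-2 < n-1) U]
      have h0 : l - 2 + 1 = l - 1 := by omega
      rw [h0]
    rw [hdsub, hesub, sC2 l h1, sC1' l (by omega), hsplit]
    ring
  have dhigh : ∀ l, Q+2 ≤ l → d l = e (l-1) := by
    intro l h1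
    rw [hdsub, sC2 l (by omega), sC2' l (by omega), hesub]
    have h0 : l - 1 - 1 = l - 2 := by omega
    rw [h0]
  -- stretch index and boundaries
  set idx : ℕ → ℕ := fun l => if l ≤ Q+1 then l else l-1 with hidx
  have hidxval : ∀ l, idx l = if l ≤ Q+1 then l else l-1 := fun l => by rw [hidx]
  set β : ℕ → ℕ := fun i => if i < Q then i+1 else i+2 with hβ
  have hβval : ∀ i, β i = if i < Q then i+1 else i+2 := fun i => by rw [hβ]
  set B : Finset ℕ := W.image β with hB
  have hBcard : B.card ≤ 2*s := le_trans Finset.card_image_le hW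
  -- claim (i)
  have claim1 : ∀ l, 1 ≤ l → l ≤ n → ∃ γ, 0 ≤ γ ∧ γ ≤ 1 ∧ d l = e (idx l) - C' Q + γ := by
    intro l h1 h2
    rcases le_or_gt l (P+1) with hc1 | hc1
    · refine ⟨C P, (hC01 P).1, (hC01 P).2, ?_⟩
      rw [dlow l hc1, hidxval l, if_pos (by omega : l ≤ Q+1)]
      ring
    · rcases le_or_gt l (Q+1) with hc2 | hc2
      · refine ⟨U (l-2), (hU01 (l-2) (by omega)).1, (hU01 (l-2) (by omega)).2, ?_⟩
        rw [dmid l (by omega) hc2, hidxval l, if_pos hc2]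
        ring
      · refine ⟨C' Q, (hC01' Q).1, (hC01' Q).2, ?_⟩
        rw [dhigh l (by omega), hidxval l, if_neg (by omega)]
        ring
  -- claim (ii)
  have claim2 : ∀ l l', 1 ≤ l → l ≤ l' → l' ≤ n →
      (∀ k ∈ B, ¬(l ≤ k ∧ k < l')) → e (idx l) = e (idx l') := by
    intro l l' h1 hll h2 hnosep
    have e1 : (l ≤ Q+1 ∧ idx l = l) ∨ (Q+1 < l ∧ idx l = l-1) := by
      rw [hidxval l]
      split_ifs with h
      · exact Or.inl ⟨h, rfl⟩
      · exact Or.inr ⟨by omega, rfl⟩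
    have e2 : (l' ≤ Q+1 ∧ idx l' = l') ∨ (Q+1 < l' ∧ idx l' = l'-1) := by
      rw [hidxval l']
      split_ifs with h
      · exact Or.inl ⟨h, rfl⟩
      · exact Or.inr ⟨by omega, rfl⟩
    have hm1 : idx l - 1 ≤ idx l' - 1 := by
      rcases e1 with ⟨ha, hb⟩ | ⟨ha, hb⟩ <;> rcases e2 with ⟨hc, hd1⟩ | ⟨hc, hd1⟩ <;>
        rw [hb, hd1] <;> omega
    have hm2 : idx l' - 1 ≤ n - 1 := by
      rcases e2 with ⟨hc, hd1⟩ | ⟨hc, hd1⟩ <;> rw [hd1] <;> omega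
    have hzero : ∑ i ∈ Finset.Ico (idx l - 1) (idx l' - 1), (U i - U' i) = 0 := by
      refine Finset.sum_eq_zero (fun i hi => ?_)
      rw [Finset.mem_Ico] at hi
      obtain ⟨hl1, hl2⟩ := hi
      have hl2n : i < n - 1 := by
        rcases e2 with ⟨hc, hd1⟩ | ⟨hc, hd1⟩ <;> rw [hd1] at hl2 <;> omega
      by_contra hne
      have hiW : i ∈ W := by
        rw [hWdef, Finset.mem_filter, Finset.mem_range]
        exact ⟨hl2n, fun h => hne (by rw [h]; ring)⟩
      have hkB : β i ∈ B := by rw [hB]; exact Finset.mem_image_of_mem β hiW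
      refine hnosep (β i) hkB ⟨?_, ?_⟩
      · rcases lt_or_ge i Q with hiQ | hiQ
        · rw [hβval i, if_pos hiQ]
          rcases e1 with ⟨ha, hb⟩ | ⟨ha, hb⟩ <;> rw [hb] at hl1 <;> omega
        · rw [hβval i, if_neg (by omega)]
          rcases e1 with ⟨ha, hb⟩ | ⟨ha, hb⟩ <;> rw [hb] at hl1 <;> omega
      · rcases lt_or_ge i Q with hiQ | hiQ
        · rw [hβval i, if_pos hiQ]
          rcases e2 with ⟨hc, hd1⟩ | ⟨hc, hd1⟩ <;> rw [hd1] at hl2 <;> omega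
        · rw [hβval i, if_neg (by omega)]
          rcases e2 with ⟨hc, hd1⟩ | ⟨hc, hd1⟩ <;> rw [hd1] at hl2 <;> omega
    have hsplit : e (idx l)
        = ∑ i ∈ Finset.Ico (idx l - 1) (idx l' - 1), (U i - U' i) + e (idx l') := by
      simp only [he]
      rw [Finset.sum_Ico_consecutive _ hm1 hm2]
    rw [hsplit, hzero, zero_add]
  -- sign hypothesis
  have hsign : ∀ l ∈ Finset.Icc 1 n, ∀ l' ∈ Finset.Icc 1 n, l ≤ l' →
      (∀ k ∈ B, ¬(l ≤ k ∧ k < l')) → 0 ≤ d l * d l' := by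
    intro l hl l' hl' hll hnosep
    rw [Finset.mem_Icc] at hl hl'
    obtain ⟨γ, hγ0, hγ1, hdl⟩ := claim1 l hl.1 hl.2
    obtain ⟨γ', hγ0', hγ1', hdl'⟩ := claim1 l' hl'.1 hl'.2
    have hE := claim2 l l' hl.1 hll hl'.2 hnosep
    rw [hdl, hdl', ← hE]
    set m := e (idx l) - C' Q with hm
    rcases le_or_gt 0 m with hm0 | hm0
    · exact mul_nonneg (by linarith) (by linarith)
    · have h1 : m + γ ≤ 0 := by omega
      have h2 : m + γ' ≤ 0 := by omega
      have h3 := mul_nonneg (neg_nonneg.mpr h1) (neg_nonneg.mpr h2)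
      calc (0:ℤ) ≤ (-(m+γ)) * (-(m+γ')) := h3
        _ = (m+γ) * (m+γ') := by ring
  -- moments
  have hmom : ∀ j ≤ 2*s, ∑ l ∈ Finset.Icc 1 n, d l * (l:ℤ)^j = 0 := by
    intro j hj
    have havec : ∀ m : ℕ, (avec (j+1) m : ℤ) = ∑ l ∈ Finset.Icc 1 m, (l:ℤ)^j := by
      intro m
      rw [avec]
      push_cast [Nat.add_sub_cancel]
      rfl
    have hswap : ∑ l ∈ Finset.Icc 1 n, d l * (l:ℤ)^j
        = ∑ i ∈ Finset.range n, (C i - C' i) * (avec (j+1) (i+1) : ℤ) := by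
      calc ∑ l ∈ Finset.Icc 1 n, d l * (l:ℤ)^j
          = ∑ l ∈ Finset.Icc 1 n, ∑ i ∈ Finset.range n,
              (if l - 1 ≤ i then (C i - C' i) * (l:ℤ)^j else 0) := by
            refine Finset.sum_congr rfl (fun l _ => ?_)
            simp only [hd]
            rw [Finset.sum_mul, ← Finset.sum_filter]
            congr 1
            ext x
            simp only [Finset.mem_Ico, Finset.mem_filter, Finset.mem_range]
            omega
        _ = ∑ i ∈ Finset.range n, ∑ l ∈ Finset.Icc 1 n,
              (if l - 1 ≤ i then (C i - C' i) * (l:ℤ)^j else 0) := Finset.sum_comm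
        _ = ∑ i ∈ Finset.range n, (C i - C' i) * (avec (j+1) (i+1) : ℤ) := by
            refine Finset.sum_congr rfl (fun i hi => ?_)
            rw [Finset.mem_range] at hi
            rw [← Finset.sum_filter]
            have hset : (Finset.Icc 1 n).filter (fun l => l-1 ≤ i) = Finset.Icc 1 (i+1) := by
              ext x
              simp only [Finset.mem_filter, Finset.mem_Icc]
              omega
            rw [hset, havec (i+1), Finset.mul_sum]
    have hjmem : j+1 ∈ Finset.Icc 1 (2*s+1) := Finset.mem_Icc.mpr ⟨by omega, by omega⟩
    have hdvd := hmod (j+1) hjmem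
    have hdec := dot_decomp n P (j+1) C U hPn hn1 hU
    have hdec' := dot_decomp n Q (j+1) C' U' hQn hn1 hU'
    set Δ := ∑ i ∈ Finset.range n, C i * (avec (j+1) (i+1) : ℤ)
      - ∑ i ∈ Finset.range n, C' i * (avec (j+1) (i+1) : ℤ) with hΔ
    set AU := ∑ i ∈ Finset.range (n-1), U i * (avec (j+1) (i+1) : ℤ) with hAU
    set AU' := ∑ i ∈ Finset.range (n-1), U' i * (avec (j+1) (i+1) : ℤ) with hAU'
    set TC := C P * (avec (j+1) (P+1) : ℤ)
      + ∑ i ∈ Finset.Ico P (n-1), U i * (((i+2)^(j+1-1) : ℕ) : ℤ) with hTC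
    set TC' := C' Q * (avec (j+1) (Q+1) : ℤ)
      + ∑ i ∈ Finset.Ico Q (n-1), U' i * (((i+2)^(j+1-1) : ℕ) : ℤ) with hTC'
    have habs1 : |AU - AU'| ≤ (2*(s:ℤ)) * (avec (j+1) (n-1) : ℤ) := by
      have hsub : AU - AU' = ∑ i ∈ W, (U i - U' i) * (avec (j+1) (i+1) : ℤ) := by
        rw [hAU, hAU', ← Finset.sum_sub_distrib]
        have h1 : ∑ i ∈ Finset.range (n-1),
            (U i * (avec (j+1) (i+1) : ℤ) - U' i * (avec (j+1) (i+1) : ℤ))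
              = ∑ i ∈ Finset.range (n-1), (U i - U' i) * (avec (j+1) (i+1) : ℤ) :=
          Finset.sum_congr rfl (fun i _ => by ring)
        rw [h1]
        refine (Finset.sum_subset (Finset.filter_subset _ _) (fun x hx hxn => ?_)).symm
        have hxx : U x = U' x := by
          by_contra hc
          exact hxn (Finset.mem_filter.mpr ⟨hx, hc⟩)
        rw [hxx]
        ring
      rw [hsub]
      refine le_trans (Finset.abs_sum_le_sum_abs _ _) ?_
      have hbound : ∀ i ∈ W, |(U i - U' i) * (avec (j+1) (i+1) : ℤ)| ≤ (avec (j+1) (n-1) : ℤ) := by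
        intro i hiW
        have hiw := Finset.mem_filter.mp hiW
        have hin : i < n-1 := Finset.mem_range.mp hiw.1
        have h01 := hU01 i hin
        have h01' := hU01' i hin
        rw [abs_mul, abs_of_nonneg (show (0:ℤ) ≤ (avec (j+1) (i+1) : ℤ) by positivity)]
        have h1 : |U i - U' i| ≤ 1 := abs_le.mpr ⟨by linarith, by linarith⟩
        have h2 : (avec (j+1) (i+1) : ℤ) ≤ (avec (j+1) (n-1) : ℤ) := by
          exact_mod_cast avec_mono (j+1) (by omega : i+1 ≤ n-1)
        calc |U i - U' i| * (avec (j+1) (i+1) : ℤ)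
            ≤ 1 * (avec (j+1) (i+1) : ℤ) :=
              mul_le_mul_of_nonneg_right h1 (by positivity)
          _ = (avec (j+1) (i+1) : ℤ) := one_mul _
          _ ≤ (avec (j+1) (n-1) : ℤ) := h2
      refine le_trans (Finset.sum_le_card_nsmul _ _ _ hbound) ?_
      rw [nsmul_eq_mul]
      have hcard : (W.card : ℤ) ≤ 2*(s:ℤ) := by exact_mod_cast hW
      exact mul_le_mul_of_nonneg_right hcard (by positivity)
    have Tbound : ∀ (Cf Uf : ℕ → ℤ) (Pf : ℕ), Pf ≤ n-1 →
        (∀ i, 0 ≤ Cf i ∧ Cf i ≤ 1) → (∀ i, i < n-1 → 0 ≤ Uf i ∧ Uf i ≤ 1) →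
        0 ≤ Cf Pf * (avec (j+1) (Pf+1) : ℤ)
            + ∑ i ∈ Finset.Ico Pf (n-1), Uf i * (((i+2)^(j+1-1) : ℕ) : ℤ)
          ∧ Cf Pf * (avec (j+1) (Pf+1) : ℤ)
            + ∑ i ∈ Finset.Ico Pf (n-1), Uf i * (((i+2)^(j+1-1) : ℕ) : ℤ)
            ≤ (avec (j+1) n : ℤ) := by
      intro Cf Uf Pf hPf h01 h01U
      have t2' : ∀ i ∈ Finset.Ico Pf (n-1), 0 ≤ Uf i * (((i+2)^(j+1-1) : ℕ) : ℤ) := by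
        intro i hi
        exact mul_nonneg (h01U i (Finset.mem_Ico.mp hi).2).1 (by positivity)
      constructor
      · have t1 : 0 ≤ Cf Pf * (avec (j+1) (Pf+1) : ℤ) := mul_nonneg (h01 Pf).1 (by positivity)
        have t2 := Finset.sum_nonneg t2'
        linarith
      · have t1 : Cf Pf * (avec (j+1) (Pf+1) : ℤ) ≤ (avec (j+1) (Pf+1) : ℤ) := by
          have h := mul_le_mul_of_nonneg_right (h01 Pf).2
            (show (0:ℤ) ≤ (avec (j+1) (Pf+1):ℤ) by positivity)
          rw [one_mul] at h
          exact h
        have t2 : ∑ i ∈ Finset.Ico Pf (n-1), Uf i * (((i+2)^(j+1-1) : ℕ) : ℤ)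
            ≤ ∑ i ∈ Finset.Ico Pf (n-1), (((i+2)^(j+1-1) : ℕ) : ℤ) := by
          refine Finset.sum_le_sum (fun i hi => ?_)
          have h := mul_le_mul_of_nonneg_right (h01U i (Finset.mem_Ico.mp hi).2).2
            (show (0:ℤ) ≤ (((i+2)^(j+1-1) : ℕ) : ℤ) by positivity)
          rw [one_mul] at h
          exact h
        have t3 : (avec (j+1) (Pf+1) : ℤ)
            + ∑ i ∈ Finset.Ico Pf (n-1), (((i+2)^(j+1-1) : ℕ) : ℤ) = (avec (j+1) n : ℤ) := by
          exact_mod_cast congrArg (fun x : ℕ => (x:ℤ)) (telescope_avec n Pf (j+1) hPf hn1)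
        linarith
    obtain ⟨hT0, hT1⟩ := Tbound C U P hPn hC01 hU01
    obtain ⟨hT0', hT1'⟩ := Tbound C' U' Q hQn hC01' hU01'
    have habs2 : |TC - TC'| ≤ (avec (j+1) n : ℤ) := by
      rw [hTC, hTC']
      exact abs_le.mpr ⟨by linarith, by linarith⟩
    have hdecomp : Δ = (AU - AU') + (TC - TC') := by
      rw [hΔ, hdec, hdec']
      rw [hAU, hAU', hTC, hTC']
      ring
    have hbound : |Δ| < (2*(s:ℤ)+1) * (n:ℤ)^(j+1) := by
      have h1 : |Δ| ≤ |AU - AU'| + |TC - TC'| := by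
        rw [hdecomp]
        exact abs_add_le _ _
      have hA1 : (avec (j+1) (n-1) : ℤ) ≤ ((n:ℤ)-1) * (n:ℤ)^j := by
        have h := avec_le (j+1) (n-1) n (by omega)
        calc (avec (j+1) (n-1) : ℤ) ≤ (((n-1) * n^(j+1-1) : ℕ) : ℤ) := by exact_mod_cast h
          _ = ((n:ℤ)-1) * (n:ℤ)^j := by
              rw [Nat.add_sub_cancel]
              push_cast [Nat.cast_sub hn1]
              ring
      have hA2 : (avec (j+1) n : ℤ) ≤ (n:ℤ) * (n:ℤ)^j := by
        have h := avec_le (j+1) n n le_rfl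
        calc (avec (j+1) n : ℤ) ≤ ((n * n^(j+1-1) : ℕ) : ℤ) := by exact_mod_cast h
          _ = (n:ℤ) * (n:ℤ)^j := by
              rw [Nat.add_sub_cancel]
              push_cast
              ring
      have hpow : (0:ℤ) < (n:ℤ)^j := by positivity
      have hns : (1:ℤ) ≤ (s:ℤ) := by exact_mod_cast hs
      have hnn : (4:ℤ) ≤ (n:ℤ) := by exact_mod_cast hn4
      have hpowsucc : (n:ℤ)^(j+1) = (n:ℤ) * (n:ℤ)^j := by
        rw [pow_succ]
        ring
      have hss : (0:ℤ) ≤ 2*(s:ℤ) := by positivity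
      have hmul1 : (2*(s:ℤ)) * (avec (j+1) (n-1) : ℤ) ≤ (2*(s:ℤ)) * (((n:ℤ)-1) * (n:ℤ)^j) :=
        mul_le_mul_of_nonneg_left hA1 hss
      have hlin : (2*(s:ℤ)) * (((n:ℤ)-1) * (n:ℤ)^j) + (n:ℤ)*(n:ℤ)^j
          < (2*(s:ℤ)+1) * (n:ℤ)^(j+1) := by
        rw [hpowsucc]
        nlinarith
      calc |Δ| ≤ |AU - AU'| + |TC - TC'| := h1
        _ ≤ (2*(s:ℤ)) * (avec (j+1) (n-1) : ℤ) + (avec (j+1) n : ℤ) := by linarith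
        _ ≤ (2*(s:ℤ)) * (((n:ℤ)-1) * (n:ℤ)^j) + (n:ℤ)*(n:ℤ)^j := by linarith
        _ < (2*(s:ℤ)+1) * (n:ℤ)^(j+1) := hlin
    have hdvd2 : ((2*(s:ℤ)+1) * (n:ℤ)^(j+1)) ∣ Δ := by
      convert hdvd using 2
      all_goals (push_cast; ring)
    have hzero : Δ = 0 := Int.eq_zero_of_abs_lt_dvd hdvd2 hbound
    rw [hswap]
    have hfin : ∑ i ∈ Finset.range n, (C i - C' i) * (avec (j+1) (i+1) : ℤ) = Δ := by
      rw [hΔ, ← Finset.sum_sub_distrib]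
      exact Finset.sum_congr rfl (fun i _ => by ring)
    rw [hfin, hzero]
  -- apply the sign/moment principle
  have hdzero := hsm d (2*s) B hBcard hsign hmom
  intro i hi
  have h1 : d (i+1) = 0 := hdzero (i+1) (Finset.mem_Icc.mpr ⟨by omega, by omega⟩)
  have h2 : d (i+2) = 0 := by
    rcases le_or_gt (i+2) n with h | h
    · exact hdzero (i+2) (Finset.mem_Icc.mpr ⟨by omega, h⟩)
    · simp only [hd]
      have h0 : i + 2 - 1 = n := by omega
      rw [h0, Finset.Ico_self, Finset.sum_empty]
  have hstep : d (i+1) = (C i - C' i) + d (i+2) := by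
    simp only [hd]
    have e1 : i + 1 - 1 = i := by omega
    have e2 : i + 2 - 1 = i + 1 := by omega
    rw [e1, e2, Finset.sum_eq_sum_Ico_succ_bot (by omega : i < n)]
  rw [h1, h2] at hstep
  linarith


private lemma delete_structure {n : ℕ} (f : Fin (n-1) → Fin n) (hf : StrictMono f) :
    ∃ P, P ≤ n-1 ∧ ∀ i : Fin (n-1),
      ((f i : ℕ) = if (i:ℕ) < P then (i:ℕ) else (i:ℕ)+1) := by
  classical
  have hlb : ∀ m, ∀ i : Fin (n-1), (i:ℕ) = m → m ≤ (f i : ℕ) := by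
    intro m
    induction m with
    | zero => intro i _; omega
    | succ m ih =>
      intro i hi
      have hm : m < n-1 := by omega
      have hlt : (⟨m, hm⟩ : Fin (n-1)) < i := by
        rw [Fin.lt_def]
        simp only [Fin.val_mk]
        omega
      have h1 := hf hlt
      rw [Fin.lt_def] at h1
      have h2 := ih ⟨m, hm⟩ (by simp)
      omega
  have hub : ∀ t, ∀ i : Fin (n-1), n-2-(i:ℕ) = t → (f i : ℕ) ≤ (i:ℕ)+1 := by
    intro t
    induction t with
    | zero =>
      intro i hi
      have h1 := i.isLt
      have h2 := (f i).isLt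
      omega
    | succ t ih =>
      intro i hi
      have h1 := i.isLt
      have hi1 : (i:ℕ)+1 < n-1 := by omega
      have hlt : i < (⟨(i:ℕ)+1, hi1⟩ : Fin (n-1)) := by
        rw [Fin.lt_def]
        simp only [Fin.val_mk]
        omega
      have h2 := hf hlt
      rw [Fin.lt_def] at h2
      have h3 := ih ⟨(i:ℕ)+1, hi1⟩ (by simp only [Fin.val_mk]; omega)
      simp only [Fin.val_mk] at h2 h3
      omega
  by_cases h : ∃ m : ℕ, ∃ hm : m < n-1, (f ⟨m, hm⟩ : ℕ) = m+1
  · set P := Nat.find h with hP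
    obtain ⟨hPlt, hPspec⟩ := Nat.find_spec h
    refine ⟨P, by omega, ?_⟩
    have hup : ∀ m, ∀ i : Fin (n-1), (i:ℕ) = P + m → (f i : ℕ) = (i:ℕ)+1 := by
      intro m
      induction m with
      | zero =>
        intro i hi
        have : i = ⟨P, hPlt⟩ := by
          apply Fin.ext
          simp only [Fin.val_mk]
          omega
        rw [this]
        simp only [Fin.val_mk]
        exact hPspec
      | succ m ih =>
        intro i hi
        have hm : P + m < n-1 := by have := i.isLt; omega
        have h2 := ih ⟨P+m, hm⟩ (by simp)
        have hlt : (⟨P+m, hm⟩ : Fin (n-1)) < i := by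
          rw [Fin.lt_def]; simp only [Fin.val_mk]; omega
        have h3 := hf hlt
        rw [Fin.lt_def] at h3
        have h4 := hub (n-2-(i:ℕ)) i rfl
        simp only [Fin.val_mk] at h2 h3
        omega
    intro i
    split_ifs with hiP
    · -- f i = i
      have h1 := hlb (i:ℕ) i rfl
      have h4 := hub (n-2-(i:ℕ)) i rfl
      rcases Nat.lt_or_ge (f i : ℕ) ((i:ℕ)+1) with hc | hc
      · omega
      · exfalso
        have hfi : (f i : ℕ) = (i:ℕ)+1 := by omega
        have : P ≤ (i:ℕ) := Nat.find_le ⟨i.isLt, by rw [Fin.eta]; exact hfi⟩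
        omega
    · exact hup ((i:ℕ) - P) i (by omega)
  · push_neg at h
    refine ⟨n-1, le_rfl, fun i => ?_⟩
    rw [if_pos i.isLt]
    have h1 := hlb (i:ℕ) i rfl
    have h4 := hub (n-2-(i:ℕ)) i rfl
    rcases Nat.lt_or_ge (f i : ℕ) ((i:ℕ)+1) with hc | hc
    · omega
    · exfalso
      exact h (i:ℕ) i.isLt (by rw [Fin.eta]; omega)


end Aux

set_option maxHeartbeats 1000000 in
theorem stmt13 (s n : ℕ) (hs : 1 ≤ s) (hn : 2 * s + 1 < n)
    (r : ℕ → ℕ) (c c' : Fin n → Bool)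
    (hc : ∀ j ∈ Finset.Icc 1 (2 * s + 1), dotA j c % ((2 * s + 1) * n ^ j) = r j)
    (hc' : ∀ j ∈ Finset.Icc 1 (2 * s + 1), dotA j c' % ((2 * s + 1) * n ^ j) = r j)
    (hne : c ≠ c') :
    Disjoint (ball s c) (ball s c') := by
  classical
  rw [Set.disjoint_left]
  rintro y ⟨f, hf, hyf⟩ ⟨g, hg, hyg⟩
  apply hne
  have hham : hammingDist (c ∘ f) (c' ∘ g) ≤ 2*s := by
    calc hammingDist (c ∘ f) (c' ∘ g)
        ≤ hammingDist (c ∘ f) y + hammingDist y (c' ∘ g) := hammingDist_triangle _ _ _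
      _ ≤ s + s := add_le_add (by rw [hammingDist_comm]; exact hyf) hyg
      _ = 2*s := by ring
  obtain ⟨P, hPle, hPf⟩ := delete_structure f hf
  obtain ⟨Q, hQle, hQg⟩ := delete_structure g hg
  set C : ℕ → ℤ := fun i => if h : i < n then (if c ⟨i,h⟩ then 1 else 0) else 0 with hC
  set C' : ℕ → ℤ := fun i => if h : i < n then (if c' ⟨i,h⟩ then 1 else 0) else 0 with hC'
  set U : ℕ → ℤ := fun i => if h : i < n-1 then (if c (f ⟨i,h⟩) then 1 else 0) else 0 with hU
  set U' : ℕ → ℤ := fun i => if h : i < n-1 then (if c' (g ⟨i,h⟩) then 1 else 0) else 0 with hU'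
  have hCF : ∀ x : Fin n, C (x : ℕ) = if c x then 1 else 0 := by
    intro x
    simp only [hC]
    rw [dif_pos x.isLt]
  have hCF' : ∀ x : Fin n, C' (x : ℕ) = if c' x then 1 else 0 := by
    intro x
    simp only [hC']
    rw [dif_pos x.isLt]
  have hC01 : ∀ i, 0 ≤ C i ∧ C i ≤ 1 := by
    intro i
    simp only [hC]
    split_ifs <;> norm_num
  have hC01' : ∀ i, 0 ≤ C' i ∧ C' i ≤ 1 := by
    intro i
    simp only [hC']
    split_ifs <;> norm_num
  have hUrel : ∀ i, i < n-1 → U i = if i < P then C i else C (i+1) := by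
    intro i hi
    have h1 : U i = C ((f ⟨i, hi⟩ : ℕ)) := by
      simp only [hU]
      rw [dif_pos hi, hCF (f ⟨i, hi⟩)]
    rw [h1, hPf ⟨i, hi⟩]
    simp only [Fin.val_mk]
    rw [apply_ite C]
  have hU'rel : ∀ i, i < n-1 → U' i = if i < Q then C' i else C' (i+1) := by
    intro i hi
    have h1 : U' i = C' ((g ⟨i, hi⟩ : ℕ)) := by
      simp only [hU']
      rw [dif_pos hi, hCF' (g ⟨i, hi⟩)]
    rw [h1, hQg ⟨i, hi⟩]
    simp only [Fin.val_mk]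
    rw [apply_ite C']
  have hind : ∀ a b : Bool, ((if a then (1:ℤ) else 0) = (if b then 1 else 0)) ↔ a = b := by
    decide
  have hWcard : ((Finset.range (n-1)).filter (fun i => U i ≠ U' i)).card ≤ 2*s := by
    have hmap : (Finset.range (n-1)).filter (fun i => U i ≠ U' i)
        = (Finset.univ.filter (fun i : Fin (n-1) => (c ∘ f) i ≠ (c' ∘ g) i)).image Fin.val := by
      ext x
      simp only [Finset.mem_filter, Finset.mem_range, Finset.mem_image, Finset.mem_univ,
        true_and, Function.comp]
      constructor
      · rintro ⟨hx, hne2⟩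
        refine ⟨⟨x, hx⟩, ?_, rfl⟩
        intro hcc
        apply hne2
        simp only [hU, hU']
        rw [dif_pos hx, dif_pos hx, hcc]
      · rintro ⟨j, hj, rfl⟩
        refine ⟨j.isLt, ?_⟩
        simp only [hU, hU']
        rw [dif_pos j.isLt, dif_pos j.isLt]
        intro hcc
        simp only [Fin.eta] at hcc
        exact hj ((hind _ _).mp hcc)
    rw [hmap, Finset.card_image_of_injective _ Fin.val_injective]
    exact le_trans (le_of_eq rfl) hham
  have hdotc : ∀ j, ((dotA j c : ℕ) : ℤ) = ∑ i ∈ Finset.range n, C i * (avec j (i+1) : ℤ) := by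
    intro j
    rw [dotA]
    push_cast
    rw [← Fin.sum_univ_eq_sum_range (fun m => C m * (avec j (m+1) : ℤ)) n]
    refine Finset.sum_congr rfl (fun i _ => ?_)
    rw [hCF i]
  have hdotc' : ∀ j, ((dotA j c' : ℕ) : ℤ) = ∑ i ∈ Finset.range n, C' i * (avec j (i+1) : ℤ) := by
    intro j
    rw [dotA]
    push_cast
    rw [← Fin.sum_univ_eq_sum_range (fun m => C' m * (avec j (m+1) : ℤ)) n]
    refine Finset.sum_congr rfl (fun i _ => ?_)
    rw [hCF' i]
  have hmodv : ∀ j ∈ Finset.Icc 1 (2*s+1),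
      ((2*s+1:ℤ) * (n:ℤ)^j) ∣ (∑ i ∈ Finset.range n, C i * (avec j (i+1) : ℤ)
        - ∑ i ∈ Finset.range n, C' i * (avec j (i+1) : ℤ)) := by
    intro j hj
    have hme : dotA j c ≡ dotA j c' [MOD (2*s+1)*n^j] := by
      unfold Nat.ModEq
      rw [hc j hj, hc' j hj]
    have hdvd := Nat.ModEq.dvd hme
    rw [← hdotc j, ← hdotc' j]
    exact_mod_cast dvd_sub_comm.mp hdvd
  rcases le_total P Q with hPQ | hPQ
  · have hfin := core s n hs hn C C' U U' P Q hPle hQle hPQ hC01 hC01' hUrel hU'rel hWcard hmodv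
      (fun d T B hB hsg hm => sign_moment d n T B hB hsg hm)
    funext x
    have h := hfin x.val x.isLt
    rw [hCF x, hCF' x] at h
    exact (hind _ _).mp h
  · have hWcard' : ((Finset.range (n-1)).filter (fun i => U' i ≠ U i)).card ≤ 2*s := by
      have hpe : (Finset.range (n-1)).filter (fun i => U' i ≠ U i)
          = (Finset.range (n-1)).filter (fun i => U i ≠ U' i) := by
        apply Finset.filter_congr
        intro i _
        exact ne_comm
      rw [hpe]
      exact hWcard
    have hmodv' : ∀ j ∈ Finset.Icc 1 (2*s+1),
        ((2*s+1:ℤ) * (n:ℤ)^j) ∣ (∑ i ∈ Finset.range n, C' i * (avec j (i+1) : ℤ)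
          - ∑ i ∈ Finset.range n, C i * (avec j (i+1) : ℤ)) := by
      intro j hj
      exact dvd_sub_comm.mp (hmodv j hj)
    have hfin := core s n hs hn C' C U' U Q P hQle hPle hPQ hC01' hC01 hU'rel hUrel hWcard' hmodv'
      (fun d T B hB hsg hm => sign_moment d n T B hB hsg hm)
    funext x
    have h := hfin x.val x.isLt
    rw [hCF x, hCF' x] at h
    exact ((hind _ _).mp h).symm
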